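/- Let G be a finite simple graph with m edges, minimum degree δ ≥ 1 and maximum degree Δ with Δ > δ + 1, and let α > 0 be real. Let A_0, A_1, A_2 be the cardinalities of the edge sets F_0 = {uv ∈ E(G) : d_u = δ, d_v = Δ}, F_1 = {uv ∈ E(G) : d_u = δ, δ < d_v < Δ}, F_2 = {uv ∈ E(G) : d_u = Δ, δ < d_v < Δ}, respectively. Then SDD_α(G) ≥ 2m + A_0 (Δ^α/δ^α + δ^α/Δ^α − 2) + A_1 ((δ+1)^α/δ^α + δ^α/(δ+1)^α − 2) + A_2 (Δ^α/(Δ−1)^α + (Δ−1)^α/Δ^α − 2). -/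

import Mathlib

open Real Finset

lemma two_le_aux {α : ℝ} {a b : ℝ} (ha : 0 < a) (hb : 0 < b) :
    2 ≤ a ^ α / b ^ α + b ^ α / a ^ α := by
  have hA : 0 < a ^ α := Real.rpow_pos_of_pos ha α
  have hB : 0 < b ^ α := Real.rpow_pos_of_pos hb α
  rw [div_add_div _ _ hB.ne' hA.ne', le_div_iff₀ (by positivity)]
  nlinarith [sq_nonneg (a ^ α - b ^ α)]

lemma key_aux {α : ℝ} (hα : 0 < α) {a b c d : ℝ} (hb : 0 < b) (hd : 0 < d)
    (h1 : b ≤ a) (h2 : d ≤ c) (h : c / d ≤ a / b) :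
    c ^ α / d ^ α + d ^ α / c ^ α ≤ a ^ α / b ^ α + b ^ α / a ^ α := by
  have ha : 0 < a := hb.trans_le h1
  have hc : 0 < c := hd.trans_le h2
  have hs : 1 ≤ c / d := (one_le_div hd).2 h2
  have ht : 1 ≤ a / b := hs.trans h
  have e1 : c ^ α / d ^ α = (c / d) ^ α := (Real.div_rpow hc.le hd.le α).symm
  have e2 : d ^ α / c ^ α = (d / c) ^ α := (Real.div_rpow hd.le hc.le α).symm
  have e3 : a ^ α / b ^ α = (a / b) ^ α := (Real.div_rpow ha.le hb.le α).symm
  have e4 : b ^ α / a ^ α = (b / a) ^ α := (Real.div_rpow hb.le ha.le α).symm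
  rw [e1, e2, e3, e4]
  have hdc : d / c = (c / d)⁻¹ := by rw [inv_div]
  have hba : b / a = (a / b)⁻¹ := by rw [inv_div]
  rw [hdc, hba, Real.inv_rpow (by positivity), Real.inv_rpow (by positivity)]
  set S := (c / d) ^ α with hS
  set T := (a / b) ^ α with hT
  have hS1 : 1 ≤ S := Real.one_le_rpow hs hα.le
  have hST : S ≤ T := Real.rpow_le_rpow (by positivity) h hα.le
  have hS0 : 0 < S := lt_of_lt_of_le one_pos hS1
  have hT0 : 0 < T := hS0.trans_le hST
  have key : S⁻¹ - T⁻¹ = (T - S) / (S * T) := by field_simp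
  have hST1 : 1 ≤ S * T := by nlinarith
  have h5 : (T - S) / (S * T) ≤ T - S := div_le_self (sub_nonneg.2 hST) hST1
  linarith

noncomputable def SDD {V : Type*} [Fintype V] (G : SimpleGraph V) [DecidableRel G.Adj]
    (α : ℝ) : ℝ :=
  ∑ e ∈ G.edgeFinset, Sym2.lift
    ⟨fun u v => (G.degree u : ℝ) ^ α / (G.degree v : ℝ) ^ α +
                (G.degree v : ℝ) ^ α / (G.degree u : ℝ) ^ α,
     fun u v => by ring⟩ e

theorem sdd_lower_bound_dD {V : Type*} [Fintype V] (G : SimpleGraph V)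
    [DecidableRel G.Adj] (hδ : 1 ≤ G.minDegree) (hΔ : G.minDegree + 1 < G.maxDegree)
    {α : ℝ} (hα : 0 < α) (A0 A1 A2 : ℕ)
    (hA0 : A0 = {e ∈ G.edgeSet | ∃ u v, e = s(u, v) ∧
      G.degree u = G.minDegree ∧ G.degree v = G.maxDegree}.ncard)
    (hA1 : A1 = {e ∈ G.edgeSet | ∃ u v, e = s(u, v) ∧
      G.degree u = G.minDegree ∧ G.minDegree < G.degree v ∧ G.degree v < G.maxDegree}.ncard)
    (hA2 : A2 = {e ∈ G.edgeSet | ∃ u v, e = s(u, v) ∧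
      G.degree u = G.maxDegree ∧ G.minDegree < G.degree v ∧ G.degree v < G.maxDegree}.ncard) :
    2 * (G.edgeFinset.card : ℝ) +
      (A0 : ℝ) * ((G.maxDegree : ℝ) ^ α / (G.minDegree : ℝ) ^ α +
        (G.minDegree : ℝ) ^ α / (G.maxDegree : ℝ) ^ α - 2) +
      (A1 : ℝ) * (((G.minDegree : ℝ) + 1) ^ α / (G.minDegree : ℝ) ^ α +
        (G.minDegree : ℝ) ^ α / ((G.minDegree : ℝ) + 1) ^ α - 2) +
      (A2 : ℝ) * ((G.maxDegree : ℝ) ^ α / ((G.maxDegree : ℝ) - 1) ^ α +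
        ((G.maxDegree : ℝ) - 1) ^ α / (G.maxDegree : ℝ) ^ α - 2)
    ≤ SDD G α := by
  classical
  have key0 : ∀ P : Sym2 V → Prop, {e ∈ G.edgeSet | P e}.ncard = (G.edgeFinset.filter P).card := by
    intro P
    rw [← Set.ncard_coe_finset]
    congr 1
    ext e
    simp [SimpleGraph.mem_edgeFinset]
  rw [key0] at hA0 hA1 hA2
  set δ := G.minDegree with hδdef
  set Δ := G.maxDegree with hΔdef
  set c0 : ℝ := (Δ : ℝ) ^ α / (δ : ℝ) ^ α + (δ : ℝ) ^ α / (Δ : ℝ) ^ α with hc0def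
  set c1 : ℝ := ((δ : ℝ) + 1) ^ α / (δ : ℝ) ^ α + (δ : ℝ) ^ α / ((δ : ℝ) + 1) ^ α with hc1def
  set c2 : ℝ := (Δ : ℝ) ^ α / ((Δ : ℝ) - 1) ^ α + ((Δ : ℝ) - 1) ^ α / (Δ : ℝ) ^ α with hc2def
  set P0 : Sym2 V → Prop := fun e => ∃ u v, e = s(u, v) ∧
      G.degree u = δ ∧ G.degree v = Δ with hP0def
  set P1 : Sym2 V → Prop := fun e => ∃ u v, e = s(u, v) ∧
      G.degree u = δ ∧ δ < G.degree v ∧ G.degree v < Δ with hP1def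
  set P2 : Sym2 V → Prop := fun e => ∃ u v, e = s(u, v) ∧
      G.degree u = Δ ∧ δ < G.degree v ∧ G.degree v < Δ with hP2def
  have expand : ∀ (c : ℝ) (P : Sym2 V → Prop),
      ∑ e ∈ G.edgeFinset, (if P e then c else 0) = ((G.edgeFinset.filter P).card : ℝ) * c := by
    intro c P
    rw [← Finset.sum_filter, Finset.sum_const, nsmul_eq_mul]
  have hδR : (0 : ℝ) < (δ : ℝ) := by exact_mod_cast (by omega : 0 < δ)
  have hΔR : (0 : ℝ) < (Δ : ℝ) := by exact_mod_cast (by omega : 0 < Δ)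
  have hΔ1R : (0 : ℝ) < (Δ : ℝ) - 1 := by
    have : (2 : ℝ) ≤ (Δ : ℝ) := by exact_mod_cast (by omega : 2 ≤ Δ)
    linarith
  have hle : ∑ e ∈ G.edgeFinset, (2 + (@ite ℝ (P0 e) (Classical.propDecidable _) (c0 - 2) 0) +
      (@ite ℝ (P1 e) (Classical.propDecidable _) (c1 - 2) 0) +
      (@ite ℝ (P2 e) (Classical.propDecidable _) (c2 - 2) 0)) ≤ SDD G α := by
    apply Finset.sum_le_sum
    intro e he
    induction e using Sym2.ind with
    | _ u v =>
      rw [SimpleGraph.mem_edgeFinset, SimpleGraph.mem_edgeSet] at he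
      simp only [Sym2.lift_mk]
      have hu1 : δ ≤ G.degree u := G.minDegree_le_degree u
      have hu2 : G.degree u ≤ Δ := G.degree_le_maxDegree u
      have hv1 : δ ≤ G.degree v := G.minDegree_le_degree v
      have hv2 : G.degree v ≤ Δ := G.degree_le_maxDegree v
      have hQ0 : P0 s(u, v) ↔ (G.degree u = δ ∧ G.degree v = Δ) ∨
          (G.degree v = δ ∧ G.degree u = Δ) := by
        constructor
        · rintro ⟨x, y, hxy, h1, h2⟩
          rcases Sym2.eq_iff.mp hxy with ⟨rfl, rfl⟩ | ⟨rfl, rfl⟩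
          · exact Or.inl ⟨h1, h2⟩
          · exact Or.inr ⟨h1, h2⟩
        · rintro (⟨h1, h2⟩ | ⟨h1, h2⟩)
          · exact ⟨u, v, rfl, h1, h2⟩
          · exact ⟨v, u, Sym2.eq_swap, h1, h2⟩
      have hQ1 : P1 s(u, v) ↔ (G.degree u = δ ∧ δ < G.degree v ∧ G.degree v < Δ) ∨
          (G.degree v = δ ∧ δ < G.degree u ∧ G.degree u < Δ) := by
        constructor
        · rintro ⟨x, y, hxy, h1, h2⟩
          rcases Sym2.eq_iff.mp hxy with ⟨rfl, rfl⟩ | ⟨rfl, rfl⟩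
          · exact Or.inl ⟨h1, h2⟩
          · exact Or.inr ⟨h1, h2⟩
        · rintro (⟨h1, h2⟩ | ⟨h1, h2⟩)
          · exact ⟨u, v, rfl, h1, h2⟩
          · exact ⟨v, u, Sym2.eq_swap, h1, h2⟩
      have hQ2 : P2 s(u, v) ↔ (G.degree u = Δ ∧ δ < G.degree v ∧ G.degree v < Δ) ∨
          (G.degree v = Δ ∧ δ < G.degree u ∧ G.degree u < Δ) := by
        constructor
        · rintro ⟨x, y, hxy, h1, h2⟩
          rcases Sym2.eq_iff.mp hxy with ⟨rfl, rfl⟩ | ⟨rfl, rfl⟩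
          · exact Or.inl ⟨h1, h2⟩
          · exact Or.inr ⟨h1, h2⟩
        · rintro (⟨h1, h2⟩ | ⟨h1, h2⟩)
          · exact ⟨u, v, rfl, h1, h2⟩
          · exact ⟨v, u, Sym2.eq_swap, h1, h2⟩
      simp only [hQ0, hQ1, hQ2]
      set a := G.degree u with hadef
      set b := G.degree v with hbdef
      have haR : (0 : ℝ) < (a : ℝ) := by exact_mod_cast (by omega : 0 < a)
      have hbR : (0 : ℝ) < (b : ℝ) := by exact_mod_cast (by omega : 0 < b)
      by_cases q0 : (a = δ ∧ b = Δ) ∨ (b = δ ∧ a = Δ)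
      · have q1 : ¬((a = δ ∧ δ < b ∧ b < Δ) ∨ (b = δ ∧ δ < a ∧ a < Δ)) := by omega
        have q2 : ¬((a = Δ ∧ δ < b ∧ b < Δ) ∨ (b = Δ ∧ δ < a ∧ a < Δ)) := by omega
        rw [if_pos q0, if_neg q1, if_neg q2]
        rcases q0 with ⟨h1, h2⟩ | ⟨h1, h2⟩ <;> rw [h1, h2] <;> rw [hc0def] <;> linarith
      · by_cases q1 : (a = δ ∧ δ < b ∧ b < Δ) ∨ (b = δ ∧ δ < a ∧ a < Δ)
        · have q2 : ¬((a = Δ ∧ δ < b ∧ b < Δ) ∨ (b = Δ ∧ δ < a ∧ a < Δ)) := by omega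
          rw [if_neg q0, if_pos q1, if_neg q2]
          rcases q1 with ⟨h1, h2, h3⟩ | ⟨h1, h2, h3⟩
          · have hcast : (δ : ℝ) + 1 ≤ (b : ℝ) := by exact_mod_cast (by omega : δ + 1 ≤ b)
            have hkey := key_aux (a := (b : ℝ)) (b := (δ : ℝ)) (c := (δ : ℝ) + 1)
              (d := (δ : ℝ)) hα hδR hδR (by linarith) (by linarith)
              (by gcongr <;> linarith)
            rw [h1, hc1def]
            linarith
          · have hcast : (δ : ℝ) + 1 ≤ (a : ℝ) := by exact_mod_cast (by omega : δ + 1 ≤ a)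
            have hkey := key_aux (a := (a : ℝ)) (b := (δ : ℝ)) (c := (δ : ℝ) + 1)
              (d := (δ : ℝ)) hα hδR hδR (by linarith) (by linarith)
              (by gcongr <;> linarith)
            rw [h1, hc1def]
            linarith
        · by_cases q2 : (a = Δ ∧ δ < b ∧ b < Δ) ∨ (b = Δ ∧ δ < a ∧ a < Δ)
          · rw [if_neg q0, if_neg q1, if_pos q2]
            rcases q2 with ⟨h1, h2, h3⟩ | ⟨h1, h2, h3⟩
            · have hcast : (b : ℝ) ≤ (Δ : ℝ) - 1 := by
                have : (b : ℝ) + 1 ≤ (Δ : ℝ) := by exact_mod_cast (by omega : b + 1 ≤ Δ)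
                linarith
              have hkey := key_aux (a := (Δ : ℝ)) (b := (b : ℝ)) (c := (Δ : ℝ))
                (d := (Δ : ℝ) - 1) hα hbR hΔ1R (by linarith) (by linarith)
                (by gcongr <;> linarith)
              rw [h1, hc2def]
              linarith
            · have hcast : (a : ℝ) ≤ (Δ : ℝ) - 1 := by
                have : (a : ℝ) + 1 ≤ (Δ : ℝ) := by exact_mod_cast (by omega : a + 1 ≤ Δ)
                linarith
              have hkey := key_aux (a := (Δ : ℝ)) (b := (a : ℝ)) (c := (Δ : ℝ))
                (d := (Δ : ℝ) - 1) hα haR hΔ1R (by linarith) (by linarith)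
                (by gcongr <;> linarith)
              rw [h1, hc2def]
              linarith
          · rw [if_neg q0, if_neg q1, if_neg q2]
            have := two_le_aux (α := α) haR hbR
            linarith
  calc 2 * (G.edgeFinset.card : ℝ) + (A0 : ℝ) * (c0 - 2) + (A1 : ℝ) * (c1 - 2) +
        (A2 : ℝ) * (c2 - 2)
      = ∑ e ∈ G.edgeFinset, (2 + (@ite ℝ (P0 e) (Classical.propDecidable _) (c0 - 2) 0) +
        (@ite ℝ (P1 e) (Classical.propDecidable _) (c1 - 2) 0) +
        (@ite ℝ (P2 e) (Classical.propDecidable _) (c2 - 2) 0)) := by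
        rw [Finset.sum_add_distrib, Finset.sum_add_distrib, Finset.sum_add_distrib,
          Finset.sum_const, nsmul_eq_mul, expand (c0 - 2) P0, expand (c1 - 2) P1,
          expand (c2 - 2) P2]
        have e0 : A0 = (G.edgeFinset.filter P0).card := by rw [hA0]; congr!
        have e1 : A1 = (G.edgeFinset.filter P1).card := by rw [hA1]; congr!
        have e2 : A2 = (G.edgeFinset.filter P2).card := by rw [hA2]; congr!
        rw [e0, e1, e2]
        simp only [hP0def, hP1def, hP2def]
        push_cast
        ring
    _ ≤ SDD G α := hle
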